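/- Let m, n ≥ 1, let A ∈ ℝ^{m×n} and b ∈ ℝ^m, and let Q be the associated normalized matrix. Fix i ∈ {1,…,m} and suppose that row i of Q contains exactly one column minimum element, located in column j (that is, q_{ij} = min_{1≤i'≤m} q_{i'j}, and for every j' ≠ j one has q_{ij'} > min_{1≤i'≤m} q_{i'j'}). Then every solution x ∈ ℝ^n of the max-plus linear system AX=b satisfies x_j = b_i − a_{ij} = min_{1≤i'≤m}(b_{i'} − a_{i'j}); in particular the variable x_j takes the same value in all solutions (x_j is a leading variable). -/
import Mathlib


open Finset

/-- `x` is a solution of the max-plus linear system `AX = b`: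
for every row `i`, `max_j (a_{ij} + x_j) = b_i`. -/
def IsMaxPlusSolution {m n : ℕ} (hn : 0 < n) (A : Fin m → Fin n → ℝ)
    (b : Fin m → ℝ) (x : Fin n → ℝ) : Prop :=
  ∀ i : Fin m, (univ.sup' ⟨⟨0, hn⟩, mem_univ _⟩ fun j => A i j + x j) = b i

/-- If row `i` of the associated normalized matrix `Q` contains exactly one column
minimum element, located in column `j`, then every solution `x` of the max-plus system
`AX = b` satisfies `x_j = b_i - a_{ij} = min_{i'} (b_{i'} - a_{i'j})`. -/
theorem stmt_7 (m n : ℕ) (hm : 0 < m) (hn : 0 < n)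
    (A : Fin m → Fin n → ℝ) (b : Fin m → ℝ) (Q : Fin m → Fin n → ℝ)
    (hQ : ∀ i j, Q i j =
      (b i - (∑ i', b i') / (m : ℝ)) - (A i j - (∑ i', A i' j) / (m : ℝ)))
    (i : Fin m) (j : Fin n)
    (hmin : Q i j = univ.inf' ⟨⟨0, hm⟩, mem_univ _⟩ fun i' => Q i' j)
    (huniq : ∀ j' : Fin n, j' ≠ j →
      Q i j' > univ.inf' ⟨⟨0, hm⟩, mem_univ _⟩ fun i' => Q i' j') :
    ∀ x : Fin n → ℝ, IsMaxPlusSolution hn A b x →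
      x j = b i - A i j ∧
        b i - A i j = univ.inf' ⟨⟨0, hm⟩, mem_univ _⟩ fun i' => b i' - A i' j := by
  intro x hx
  -- Q comparison in a fixed column is equivalent to comparing b i - A i j
  have hQle : ∀ (i₁ i₂ : Fin m) (j' : Fin n),
      Q i₁ j' ≤ Q i₂ j' ↔ b i₁ - A i₁ j' ≤ b i₂ - A i₂ j' := by
    intro i₁ i₂ j'
    rw [hQ, hQ]
    constructor <;> intro h <;> linarith
  -- each term is at most b i'
  have hle : ∀ (i' : Fin m) (j' : Fin n), A i' j' + x j' ≤ b i' := by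
    intro i' j'
    rw [← hx i']
    exact le_sup' (fun j'' => A i' j'' + x j'') (mem_univ j')
  -- second conjunct
  have hmin' : ∀ i' : Fin m, b i - A i j ≤ b i' - A i' j := by
    intro i'
    exact (hQle i i' j).mp (hmin ▸ inf'_le _ (mem_univ i'))
  have h2 : b i - A i j = univ.inf' ⟨⟨0, hm⟩, mem_univ _⟩ fun i' => b i' - A i' j :=
    le_antisymm (le_inf' _ _ fun i' _ => hmin' i') (inf'_le _ (mem_univ i))
  refine ⟨?_, h2⟩
  -- the max in row i is attained
  obtain ⟨j₀, -, hj₀⟩ := exists_mem_eq_sup' (⟨⟨0, hn⟩, mem_univ _⟩ :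
    (univ : Finset (Fin n)).Nonempty) (fun j' => A i j' + x j')
  rw [hx i] at hj₀
  by_cases hjj : j₀ = j
  · subst hjj
    linarith [hj₀]
  · exfalso
    have hq := huniq j₀ hjj
    have hq' : ∃ i' ∈ (univ : Finset (Fin m)), Q i' j₀ < Q i j₀ := (inf'_lt_iff _).mp hq
    obtain ⟨i', -, hi'⟩ := hq'
    have : b i' - A i' j₀ < b i - A i j₀ := by
      by_contra h
      push_neg at h
      exact absurd ((hQle i i' j₀).mpr h) (not_le.mpr hi')
    have := hle i' j₀
    linarith [hj₀]
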